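/- Let G be a group and K a field of characteristic 0 with algebraic closure K̄. Let ρ : G → GL_n(K̄) be a semisimple representation with irreducible decomposition ρ ≅ ρ₁ ⊕ ⋯ ⊕ ρ_r. Assume: (i) ρ is defined over some finite extension of K inside K̄; (ii) Tr ρ(g) ∈ K for every g ∈ G; (iii) there exists g₀ ∈ G such that the characteristic polynomial of ρ(g₀) has n distinct roots, all lying in K. Then each irreducible component ρ_i (1 ≤ i ≤ r) is defined over K. -/

import Mathlib

open Matrix Polynomial

/-- A matrix representation `ρ : G → GLₙ(F)` is *defined over* a subfield `E ⊆ F` if some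
single conjugate of it has all matrix entries in `E`. -/
def MatRep.IsDefinedOver {G : Type*} [Group G] {F : Type*} [Field F] {ι : Type*}
    [Fintype ι] [DecidableEq ι]
    (ρ : G →* Matrix.GeneralLinearGroup ι F) (E : Subfield F) : Prop :=
  ∃ M : Matrix.GeneralLinearGroup ι F,
    ∀ (g : G) (i j : ι),
      ((M * ρ g * M⁻¹ : Matrix.GeneralLinearGroup ι F) : Matrix ι ι F) i j ∈ E

/-- A matrix representation is *irreducible* if the underlying space is nonzero and the only
`G`-invariant subspaces (for the `mulVec` action) are `⊥` and `⊤`. -/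
def MatRep.IsIrreducible {G : Type*} [Group G] {F : Type*} [Field F] {ι : Type*}
    [Fintype ι] [DecidableEq ι]
    (ρ : G →* Matrix.GeneralLinearGroup ι F) : Prop :=
  Nonempty ι ∧
    ∀ p : Submodule F (ι → F),
      (∀ g : G, ∀ v ∈ p, ((ρ g : Matrix ι ι F)).mulVec v ∈ p) → p = ⊥ ∨ p = ⊤

theorem aux_eval_charpoly {F : Type*} [Field F] {m : Type*} [Fintype m] [DecidableEq m]
    (A : Matrix m m F) (t : F) : (Matrix.charpoly A).eval t = (t • (1 : Matrix m m F) - A).det := by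
  rw [Matrix.charpoly, ← Polynomial.coe_evalRingHom, RingHom.map_det]
  congr 1
  ext i j
  by_cases h : i = j
  · subst h
    simp [charmatrix_apply_eq, Matrix.smul_apply, Matrix.one_apply, Matrix.sub_apply]
  · simp [charmatrix_apply_ne _ _ _ h, Matrix.smul_apply, Matrix.one_apply_ne h,
      Matrix.sub_apply]

theorem aux_diagonalize {F : Type*} [Field F] {m : ℕ} (A : Matrix (Fin m) (Fin m) F)
    (ν : Fin m → F) (hν : Function.Injective ν)
    (hroot : ∀ a, (Matrix.charpoly A).IsRoot (ν a)) :
    ∃ Q : Matrix (Fin m) (Fin m) F, IsUnit Q.det ∧ A * Q = Q * Matrix.diagonal ν := by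
  rcases Nat.eq_zero_or_pos m with hm | hm
  · subst hm
    refine ⟨1, by simp, ?_⟩
    ext i j
    exact i.elim0
  haveI : NeZero m := ⟨Nat.pos_iff_ne_zero.mp hm⟩
  have hv : ∀ a : Fin m, ∃ v : Fin m → F, v ≠ 0 ∧ A.mulVec v = ν a • v := by
    intro a
    have h0 : ((ν a • (1 : Matrix (Fin m) (Fin m) F) - A)).det = 0 := by
      rw [← aux_eval_charpoly]; exact hroot a
    obtain ⟨v, hv0, hv⟩ := (Matrix.exists_mulVec_eq_zero_iff).2 h0
    refine ⟨v, hv0, ?_⟩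
    have h2 := hv
    rw [Matrix.sub_mulVec, sub_eq_zero] at h2
    rw [← h2, Matrix.smul_mulVec, Matrix.one_mulVec]
  choose v hv0 hvA using hv
  have hli : LinearIndependent F v := by
    apply Module.End.eigenvectors_linearIndependent' (Matrix.mulVecLin A) ν hν
    intro a
    constructor
    · rw [Module.End.mem_eigenspace_iff]
      simpa [Matrix.mulVecLin_apply] using hvA a
    · exact hv0 a
  have hcard : Fintype.card (Fin m) = Module.finrank F (Fin m → F) := by simp
  let b : Module.Basis (Fin m) F (Fin m → F) := basisOfLinearIndependentOfCardEqFinrank hli hcard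
  have hb : ∀ a, b a = v a := fun a => by
    simp [b, coe_basisOfLinearIndependentOfCardEqFinrank]
  let Q : Matrix (Fin m) (Fin m) F := (Pi.basisFun F (Fin m)).toMatrix b
  have hQ : ∀ i j, Q i j = v j i := by
    intro i j
    rw [show Q = (Pi.basisFun F (Fin m)).toMatrix b from rfl, Module.Basis.toMatrix_apply, hb,
      Pi.basisFun_repr]
  refine ⟨Q, ?_, ?_⟩
  · have : Invertible Q := (Pi.basisFun F (Fin m)).invertibleToMatrix b
    exact isUnit_det_of_invertible Q
  · ext i j
    rw [Matrix.mul_apply, Matrix.mul_diagonal, hQ]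
    have h3 := congrFun (hvA j) i
    simp only [Matrix.mulVec, dotProduct, Pi.smul_apply, smul_eq_mul] at h3
    simp only [hQ]
    rw [show ∑ k, A i k * v j k = ν j * v j i from h3, mul_comm]

theorem aux_roots {F : Type*} [Field F] [IsAlgClosed F] {r n : ℕ} (m : Fin r → ℕ)
    (p : Fin r → F[X]) (hmonic : ∀ i, (p i).Monic) (hdeg : ∀ i, (p i).natDegree = m i)
    (root : Fin n → F) (hinj : Function.Injective root)
    (hprod : ∏ i, p i = ∏ j, (X - C (root j))) :
    ∃ ν : (i : Fin r) → Fin (m i) → F,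
      (∀ i a, (p i).IsRoot (ν i a)) ∧
      Function.Injective (fun x : Σ i : Fin r, Fin (m i) => ν x.1 x.2) ∧
      (∀ i a, ∃ j, ν i a = root j) := by
  classical
  have hne : ∀ i, p i ≠ 0 := fun i => (hmonic i).ne_zero
  have hprodne : (∏ i, p i) ≠ 0 := Finset.prod_ne_zero_iff.2 fun i _ => hne i
  have hR : (∏ j, (X - C (root j))).roots = (Finset.univ.val.map root) := by
    have : (∏ j, (X - C (root j))) = ((Finset.univ.val.map root).map fun a => X - C a).prod := by
      rw [Multiset.map_map]
      rfl
    rw [this, Polynomial.roots_multiset_prod_X_sub_C]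
  have hRnodup : (Finset.univ.val.map root).Nodup :=
    Multiset.Nodup.map hinj Finset.univ.nodup
  have hL : (∏ i, p i).roots = Finset.univ.val.bind fun i => (p i).roots := by
    rw [Polynomial.roots_prod _ _ hprodne]
  have hkey : (Finset.univ.val.bind fun i => (p i).roots) = Finset.univ.val.map root := by
    rw [← hL, hprod, hR]
  have hSnodup : (Finset.univ.val.bind fun i : Fin r => (p i).roots).Nodup := by
    rw [hkey]; exact hRnodup
  have hcard : ∀ i, ((p i).roots).card = m i := by
    intro i
    rw [← hdeg i]
    exact (Polynomial.splits_iff_card_roots).1 (IsAlgClosed.splits (p i))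
  have hlen : ∀ i, ((p i).roots).toList.length = m i := fun i => by
    rw [Multiset.length_toList, hcard i]
  have hsub : ∀ i, (p i).roots ≤ Finset.univ.val.bind fun i => (p i).roots := by
    intro i
    exact Multiset.le_bind _ (Finset.mem_univ i)
  have hnodup : ∀ i, ((p i).roots).Nodup := fun i => Multiset.nodup_of_le (hsub i) hSnodup
  have hgetmem : ∀ (i : Fin r) (a : Fin (m i)),
      ((p i).roots).toList.get (Fin.cast (hlen i).symm a) ∈ (p i).roots := by
    intro i a
    rw [← Multiset.mem_toList]
    exact List.get_mem _ _
  refine ⟨fun i a => ((p i).roots).toList.get (Fin.cast (hlen i).symm a), ?_, ?_, ?_⟩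
  · intro i a
    exact Polynomial.isRoot_of_mem_roots (hgetmem i a)
  · rintro ⟨i, a⟩ ⟨i', a'⟩ h
    simp only at h
    by_cases hii : i = i'
    · subst hii
      congr 1
      have hnd : ((p i).roots).toList.Nodup := by
        rw [← Multiset.coe_nodup, Multiset.coe_toList]
        exact hnodup i
      have := (List.nodup_iff_injective_get).1 hnd h
      simpa [Fin.ext_iff] using this
    · exfalso
      set x := ((p i).roots).toList.get (Fin.cast (hlen i).symm a) with hx
      have hxi : x ∈ (p i).roots := hgetmem i a
      have hxi' : x ∈ (p i').roots := by
        have := hgetmem i' a'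
        rw [← h] at this
        exact this
      have h1 : 1 ≥ Multiset.count x (Finset.univ.val.bind fun i => (p i).roots) :=
        Multiset.nodup_iff_count_le_one.1 hSnodup x
      have h2 : Multiset.count x (Finset.univ.val.bind fun i => (p i).roots) =
          ∑ j : Fin r, Multiset.count x ((p j).roots) := by
        rw [Multiset.count_bind]
        rfl
      have e1 : ∑ j : Fin r, Multiset.count x ((p j).roots) =
          Multiset.count x ((p i).roots) +
            ∑ j ∈ Finset.univ.erase i, Multiset.count x ((p j).roots) :=
        (Finset.add_sum_erase _ _ (Finset.mem_univ i)).symm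
      have e2 : Multiset.count x ((p i').roots) ≤
          ∑ j ∈ Finset.univ.erase i, Multiset.count x ((p j).roots) :=
        Finset.single_le_sum (f := fun j => Multiset.count x ((p j).roots))
          (fun _ _ => Nat.zero_le _)
          (Finset.mem_erase.2 ⟨fun hh => hii hh.symm, Finset.mem_univ _⟩)
      have h4 : 1 ≤ Multiset.count x ((p i).roots) := Multiset.one_le_count_iff_mem.2 hxi
      have h5 : 1 ≤ Multiset.count x ((p i').roots) := Multiset.one_le_count_iff_mem.2 hxi'
      omega
  · intro i a
    have hx : ((p i).roots).toList.get (Fin.cast (hlen i).symm a) ∈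
        Finset.univ.val.map root := by
      rw [← hkey]
      exact Multiset.mem_bind.2 ⟨i, Finset.mem_univ i, hgetmem i a⟩
    obtain ⟨j, _, hj⟩ := Multiset.mem_map.1 hx
    exact ⟨j, hj.symm⟩

theorem aux_det_blockDiagonal' {R : Type*} [CommRing R] {r : ℕ} {m : Fin r → ℕ}
    (A : (i : Fin r) → Matrix (Fin (m i)) (Fin (m i)) R) :
    (Matrix.blockDiagonal' A).det = ∏ i, (A i).det := by
  classical
  rw [Matrix.BlockTriangular.det_fintype (Matrix.blockTriangular_blockDiagonal' A)]
  refine Finset.prod_congr rfl fun i _ => ?_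
  let σ : Fin (m i) ≃ {x : Σ j : Fin r, Fin (m j) // x.1 = i} :=
    { toFun := fun a => ⟨⟨i, a⟩, rfl⟩
      invFun := fun x => Fin.cast (congrArg m x.2) x.1.2
      left_inv := fun a => rfl
      right_inv := by rintro ⟨⟨j, b⟩, rfl⟩; rfl }
  have h1 : ((Matrix.blockDiagonal' A).toSquareBlock Sigma.fst i).submatrix σ σ = A i := by
    ext a b
    simp only [Matrix.submatrix_apply, Matrix.toSquareBlock_def]
    exact Matrix.blockDiagonal'_apply_eq A i a b
  rw [← Matrix.det_submatrix_equiv_self σ, h1]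

theorem aux_charpoly_conj {R : Type*} [CommRing R] {n : Type*} [Fintype n] [DecidableEq n]
    (U A : Matrix n n R) (hU : IsUnit U.det) :
    (U * A * U⁻¹).charpoly = A.charpoly := by
  let φ := (C : R →+* R[X]).mapMatrix (m := n)
  have hUU : U * U⁻¹ = 1 := Matrix.mul_nonsing_inv U hU
  have h1 : charmatrix (U * A * U⁻¹) = φ U * charmatrix A * φ U⁻¹ := by
    unfold charmatrix
    rw [Matrix.mul_sub, Matrix.sub_mul]
    congr 1
    · have hc : φ U * Matrix.scalar n (X : R[X]) = Matrix.scalar n (X : R[X]) * φ U :=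
        ((Matrix.scalar_commute (X : R[X]) (fun r' => Commute.all _ _) (φ U))).eq.symm
      rw [hc, Matrix.mul_assoc, ← map_mul φ, hUU, _root_.map_one, Matrix.mul_one]
    · show (C : R →+* R[X]).mapMatrix (U * A * U⁻¹) = _
      rw [map_mul φ, map_mul φ]
  rw [Matrix.charpoly, Matrix.charpoly, h1, Matrix.det_mul, Matrix.det_mul]
  have h2 : (φ U).det * (charmatrix A).det * (φ U⁻¹).det
      = (charmatrix A).det * ((φ U * φ U⁻¹).det) := by rw [Matrix.det_mul]; ring
  rw [h2, ← map_mul φ, hUU, _root_.map_one, Matrix.det_one, mul_one]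

theorem aux_charmatrix_blockDiagonal' {R : Type*} [CommRing R] {r : ℕ} {m : Fin r → ℕ}
    (A : (i : Fin r) → Matrix (Fin (m i)) (Fin (m i)) R) :
    charmatrix (Matrix.blockDiagonal' A) = Matrix.blockDiagonal' fun i => charmatrix (A i) := by
  ext ⟨i, a⟩ ⟨j, b⟩
  by_cases h : i = j
  · subst h
    by_cases hab : a = b
    · subst hab
      rw [charmatrix_apply_eq, Matrix.blockDiagonal'_apply_eq, Matrix.blockDiagonal'_apply_eq,
        charmatrix_apply_eq]
    · have hne : (⟨i, a⟩ : Σ i : Fin r, Fin (m i)) ≠ ⟨i, b⟩ := by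
        simp [Sigma.ext_iff, hab]
      rw [charmatrix_apply_ne _ _ _ hne, Matrix.blockDiagonal'_apply_eq,
        Matrix.blockDiagonal'_apply_eq, charmatrix_apply_ne _ _ _ hab]
  · have hne : (⟨i, a⟩ : Σ i : Fin r, Fin (m i)) ≠ ⟨j, b⟩ := by
      simp [Sigma.ext_iff, h]
    rw [charmatrix_apply_ne _ _ _ hne, Matrix.blockDiagonal'_apply_ne _ _ _ h,
      Matrix.blockDiagonal'_apply_ne _ _ _ h, map_zero, neg_zero]

theorem aux_charpoly_blockDiagonal' {R : Type*} [CommRing R] {r : ℕ} {m : Fin r → ℕ}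
    (A : (i : Fin r) → Matrix (Fin (m i)) (Fin (m i)) R) :
    (Matrix.blockDiagonal' A).charpoly = ∏ i, (A i).charpoly := by
  rw [Matrix.charpoly, aux_charmatrix_blockDiagonal', aux_det_blockDiagonal']
  rfl

theorem aux_sand {F : Type*} [Field F] {N : Type*} [Fintype N] [DecidableEq N]
    (A B : Matrix N N F) (l : N) (p q : N) :
    (A * (Matrix.single l l (1 : F) * B) : Matrix N N F) p q = A p l * B l q := by
  rw [Matrix.mul_apply]
  rw [Finset.sum_eq_single l]
  · rw [Matrix.single_mul_apply_same, one_mul]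
  · intro c _ hc
    rw [Matrix.single_mul_apply_of_ne (1 : F) l l c q hc B, mul_zero]
  · intro h
    exact absurd (Finset.mem_univ l) h

theorem aux_trE {F : Type*} [Field F] {N : Type*} [Fintype N] [DecidableEq N]
    (W : Matrix N N F) (j : N) :
    (W * Matrix.single j j (1 : F)).trace = W j j := by
  rw [Matrix.trace]
  rw [Finset.sum_eq_single j]
  · rw [Matrix.diag_apply, Matrix.mul_single_apply_same, mul_one]
  · intro c _ hc
    rw [Matrix.diag_apply, Matrix.mul_single_apply_of_ne _ _ _ c c hc]
  · intro h
    exact absurd (Finset.mem_univ j) h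

theorem aux_core {K F G N : Type*} [Field K] [Field F] [Algebra K F] [Group G]
    [Fintype N] [DecidableEq N]
    (y : G →* Matrix N N F) (htr : ∀ g : G, (y g).trace ∈ (algebraMap K F).fieldRange)
    (g₀ : G) (μ : N → K) (hμ : Function.Injective μ)
    (hD : y g₀ = Matrix.diagonal fun j => algebraMap K F (μ j)) :
    (∀ (g h : G) (j k : N), y g j k * y h k j ∈ (algebraMap K F).fieldRange) ∧
    (∀ (g h f : G) (j k l : N),
      y g j k * y h k l * y f l j ∈ (algebraMap K F).fieldRange) := by
  classical
  set E₀ := (algebraMap K F).fieldRange with hE₀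
  set Z : Submodule K (Matrix N N F) := Submodule.span K (Set.range y) with hZ
  have hyZ : ∀ g : G, y g ∈ Z := fun g => Submodule.subset_span ⟨g, rfl⟩
  have hZmul : ∀ X ∈ Z, ∀ Y ∈ Z, X * Y ∈ Z := by
    have hZZ : Z * Z ≤ Z := by
      rw [hZ, Submodule.span_mul_span]
      refine Submodule.span_le.2 ?_
      rintro x hx
      obtain ⟨a, ⟨g, rfl⟩, b, ⟨h, rfl⟩, rfl⟩ := hx
      exact Submodule.subset_span ⟨g * h, (map_mul y g h)⟩
    intro X hX Y hY
    exact hZZ (Submodule.mul_mem_mul hX hY)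
  have htrZ : ∀ X ∈ Z, X.trace ∈ E₀ := by
    intro X hX
    induction hX using Submodule.span_induction with
    | mem x hx => obtain ⟨g, rfl⟩ := hx; exact htr g
    | zero => simp only [Matrix.trace_zero]; exact zero_mem E₀
    | add a b _ _ ha hb => rw [Matrix.trace_add]; exact add_mem ha hb
    | smul c a _ ha =>
        rw [Matrix.trace_smul, Algebra.smul_def]
        exact mul_mem ⟨c, rfl⟩ ha
  -- the spectral idempotents
  have hEZ : ∀ j : N, Matrix.single j j (1 : F) ∈ Z := by
    intro j
    have hinjOn : Set.InjOn μ (Finset.univ : Finset N) := fun a _ b _ h => hμ h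
    have hEeq : Matrix.single j j (1 : F)
        = Polynomial.aeval (y g₀) (Lagrange.basis Finset.univ μ j) := by
      have h1 : Polynomial.aeval (y g₀) (Lagrange.basis Finset.univ μ j)
          = Matrix.diagonal fun l => Polynomial.aeval (algebraMap K F (μ l))
              (Lagrange.basis Finset.univ μ j) := by
        rw [hD]
        have h2 : (Matrix.diagonal fun l => algebraMap K F (μ l))
            = Matrix.diagonalAlgHom K (fun l => algebraMap K F (μ l)) := rfl
        rw [h2, Polynomial.aeval_algHom_apply]
        show Matrix.diagonalAlgHom K _ = _
        have h3 : (Polynomial.aeval (fun l => algebraMap K F (μ l)))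
            (Lagrange.basis Finset.univ μ j)
            = fun l => Polynomial.aeval (algebraMap K F (μ l))
                (Lagrange.basis Finset.univ μ j) := by
          funext l
          exact (Polynomial.aeval_algHom_apply (Pi.evalAlgHom K (fun _ => F) l)
            (fun l' => algebraMap K F (μ l')) (Lagrange.basis Finset.univ μ j)).symm
        rw [h3]
        rfl
      rw [h1]
      ext a b
      by_cases hab : a = b
      · subst hab
        rw [Matrix.diagonal_apply_eq]
        rw [Polynomial.aeval_algebraMap_apply_eq_algebraMap_eval]
        by_cases haj : a = j
        · subst haj
          rw [Lagrange.eval_basis_self hinjOn (Finset.mem_univ a)]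
          simp
        · rw [Lagrange.eval_basis_of_ne (fun h => haj h.symm) (Finset.mem_univ a)]
          simp [Matrix.single_apply_of_ne _ _ _ _ _ (fun h => haj h.1.symm)]
      · rw [Matrix.diagonal_apply_ne _ hab,
          Matrix.single_apply_of_ne _ _ _ _ _
            (fun h => hab (h.1.symm.trans h.2))]
    rw [hEeq, Polynomial.aeval_eq_sum_range]
    refine Submodule.sum_mem Z fun i _ => Submodule.smul_mem Z _ ?_
    have : (y g₀) ^ i = y (g₀ ^ i) := (map_pow y g₀ i).symm
    rw [this]
    exact hyZ _
  constructor
  · intro g h j k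
    have hmem : (y g * (Matrix.single k k 1 * y h)) * Matrix.single j j 1 ∈ Z :=
      hZmul _ (hZmul _ (hyZ g) _ (hZmul _ (hEZ k) _ (hyZ h))) _ (hEZ j)
    have := htrZ _ hmem
    rwa [aux_trE, aux_sand] at this
  · intro g h f j k l
    have hmem : (y g * (Matrix.single k k 1 * (y h * (Matrix.single l l 1 * y f))))
        * Matrix.single j j 1 ∈ Z :=
      hZmul _ (hZmul _ (hyZ g) _ (hZmul _ (hEZ k) _
        (hZmul _ (hyZ h) _ (hZmul _ (hEZ l) _ (hyZ f))))) _ (hEZ j)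
    have := htrZ _ hmem
    rw [aux_trE, aux_sand] at this
    rw [aux_sand] at this
    rwa [← mul_assoc] at this


theorem aux_burnside {F G : Type*} [Field F] [Group G] {m : ℕ}
    (σ : G →* Matrix.GeneralLinearGroup (Fin m) F)
    (hirr : MatRep.IsIrreducible σ) (Q : Matrix (Fin m) (Fin m) F) (hQ : IsUnit Q.det)
    (a b : Fin m) :
    ∃ g : G, (Q⁻¹ * (σ g : Matrix (Fin m) (Fin m) F) * Q) a b ≠ 0 := by
  by_contra hcon
  push_neg at hcon
  set v₀ : Fin m → F := Q.mulVec (Pi.single b 1) with hv₀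
  set p : Submodule F (Fin m → F) :=
    Submodule.span F {w | ∃ g : G, w = ((σ g : Matrix (Fin m) (Fin m) F)).mulVec v₀} with hp
  have hstab : ∀ g : G, ∀ v ∈ p, ((σ g : Matrix (Fin m) (Fin m) F)).mulVec v ∈ p := by
    intro g v hv
    induction hv using Submodule.span_induction with
    | mem x hx =>
        obtain ⟨h, rfl⟩ := hx
        rw [Matrix.mulVec_mulVec]
        refine Submodule.subset_span ⟨g * h, ?_⟩
        rw [← Units.val_mul, ← map_mul σ]
    | zero => rw [Matrix.mulVec_zero]; exact zero_mem p
    | add x z _ _ hx hz => rw [Matrix.mulVec_add]; exact add_mem hx hz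
    | smul c x _ hx => rw [Matrix.mulVec_smul]; exact Submodule.smul_mem p c hx
  have hv₀p : v₀ ∈ p := by
    refine Submodule.subset_span ⟨1, ?_⟩
    rw [map_one σ]
    simp
  have hv₀ne : v₀ ≠ 0 := by
    intro h
    have h1 : Q⁻¹.mulVec (Q.mulVec (Pi.single b 1)) = Pi.single b 1 := by
      rw [Matrix.mulVec_mulVec, Matrix.nonsing_inv_mul Q hQ, Matrix.one_mulVec]
    rw [← hv₀, h, Matrix.mulVec_zero] at h1
    have := congrFun h1 b
    simp at this
  have hptop : p = ⊤ := by
    rcases hirr.2 p hstab with hbot | htop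
    · exact absurd (hbot ▸ hv₀p) (by simpa using hv₀ne)
    · exact htop
  -- the functional
  set φ : (Fin m → F) →ₗ[F] F :=
    (LinearMap.proj a).comp (Matrix.mulVecLin Q⁻¹) with hφ
  have hφ0 : ∀ v ∈ p, φ v = 0 := by
    intro v hv
    induction hv using Submodule.span_induction with
    | mem x hx =>
        obtain ⟨g, rfl⟩ := hx
        have : Q⁻¹.mulVec (((σ g : Matrix (Fin m) (Fin m) F)).mulVec v₀)
            = (Q⁻¹ * (σ g : Matrix (Fin m) (Fin m) F) * Q).mulVec (Pi.single b 1) := by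
          rw [hv₀, Matrix.mulVec_mulVec, Matrix.mulVec_mulVec]
        show (Q⁻¹.mulVec _) a = 0
        rw [this]
        have hone : (Q⁻¹ * (σ g : Matrix (Fin m) (Fin m) F) * Q).mulVec (Pi.single b 1) a
            = (Q⁻¹ * (σ g : Matrix (Fin m) (Fin m) F) * Q) a b := by
          rw [Matrix.mulVec_single]
          simp
        rw [hone]
        exact hcon g
    | zero => simp
    | add x z _ _ hx hz => rw [map_add, hx, hz, add_zero]
    | smul c x _ hx => rw [_root_.map_smul, hx, smul_zero]
  have h1 : φ (Q.mulVec (Pi.single a 1)) = 1 := by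
    show (Q⁻¹.mulVec (Q.mulVec (Pi.single a 1))) a = 1
    rw [Matrix.mulVec_mulVec, Matrix.nonsing_inv_mul Q hQ, Matrix.one_mulVec]
    simp
  have h2 : φ (Q.mulVec (Pi.single a 1)) = 0 := hφ0 _ (hptop ▸ Submodule.mem_top)
  rw [h1] at h2
  exact one_ne_zero h2

/-- **Lemma (each irreducible component is defined over `K`).**
Let `K` be a field of characteristic `0` with algebraic closure `K̄`, and let
`ρ : G → GLₙ(K̄)` be a representation which is (conjugate to) a direct sum of irreducible
representations `ρ₁ ⊕ ⋯ ⊕ ρᵣ`.  Assume `ρ` is defined over a finite extension of `K`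
inside `K̄`, all traces of `ρ` lie in `K`, and some `ρ(g₀)` has characteristic polynomial
with `n` distinct roots all lying in `K`.  Then each `ρᵢ` is defined over `K`. -/
theorem each_component_defined_over_base
    {G : Type*} [Group G] {K : Type*} [Field K] [CharZero K] {n r : ℕ}
    (ρ : G →* Matrix.GeneralLinearGroup (Fin n) (AlgebraicClosure K))
    (m : Fin r → ℕ)
    (ρi : (i : Fin r) → G →* Matrix.GeneralLinearGroup (Fin (m i)) (AlgebraicClosure K))
    (hirr : ∀ i, MatRep.IsIrreducible (ρi i))
    (e : (Σ i : Fin r, Fin (m i)) ≃ Fin n)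
    (M : Matrix.GeneralLinearGroup (Fin n) (AlgebraicClosure K))
    (hdecomp : ∀ g : G,
      (ρ g : Matrix (Fin n) (Fin n) (AlgebraicClosure K)) =
        (M : Matrix (Fin n) (Fin n) (AlgebraicClosure K)) *
          (Matrix.reindex e e
            (Matrix.blockDiagonal' fun i =>
              ((ρi i g : Matrix (Fin (m i)) (Fin (m i)) (AlgebraicClosure K))))) *
          ((M⁻¹ : Matrix.GeneralLinearGroup (Fin n) (AlgebraicClosure K)) :
            Matrix (Fin n) (Fin n) (AlgebraicClosure K)))
    (hfin : ∃ E : IntermediateField K (AlgebraicClosure K),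
      FiniteDimensional K E ∧ MatRep.IsDefinedOver ρ E.toSubfield)
    (htr : ∀ g : G,
      (ρ g : Matrix (Fin n) (Fin n) (AlgebraicClosure K)).trace ∈
        (algebraMap K (AlgebraicClosure K)).fieldRange)
    (g₀ : G)
    (hg₀ : ∃ roots : Fin n → AlgebraicClosure K, Function.Injective roots ∧
      (∀ i, roots i ∈ (algebraMap K (AlgebraicClosure K)).fieldRange) ∧
      (ρ g₀ : Matrix (Fin n) (Fin n) (AlgebraicClosure K)).charpoly =
        ∏ i, (X - C (roots i))) :
    ∀ i : Fin r,
      MatRep.IsDefinedOver (ρi i) ((algebraMap K (AlgebraicClosure K)).fieldRange) := by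
  classical
  set F := AlgebraicClosure K with hF
  set E₀ := (algebraMap K F).fieldRange with hE₀
  obtain ⟨root, hrinj, hrmem, hchar⟩ := hg₀
  -- Step 1: product of block charpolys equals the split squarefree polynomial
  have hMdet : IsUnit (M : Matrix (Fin n) (Fin n) F).det := Matrix.isUnits_det_units M
  have hconj : (ρ g₀ : Matrix (Fin n) (Fin n) F).charpoly =
      (Matrix.reindex e e (Matrix.blockDiagonal' fun i =>
        ((ρi i g₀ : Matrix (Fin (m i)) (Fin (m i)) F)))).charpoly := by
    rw [hdecomp g₀, Matrix.coe_units_inv M]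
    exact aux_charpoly_conj _ _ hMdet
  have hprod : (∏ i, ((ρi i g₀ : Matrix (Fin (m i)) (Fin (m i)) F)).charpoly)
      = ∏ j, (X - C (root j)) := by
    rw [← aux_charpoly_blockDiagonal', ← Matrix.charpoly_reindex e, ← hconj, hchar]
  -- Step 2: per-block eigenvalues
  obtain ⟨ν, hνroot, hνinj, hνmem⟩ := aux_roots m
    (fun i => ((ρi i g₀ : Matrix (Fin (m i)) (Fin (m i)) F)).charpoly)
    (fun i => Matrix.charpoly_monic _)
    (fun i => (Matrix.charpoly_natDegree_eq_dim _).trans (Fintype.card_fin (m i)))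
    root hrinj hprod
  have hmemE : ∀ x : Σ i : Fin r, Fin (m i), ν x.1 x.2 ∈ E₀ := by
    rintro ⟨i, a⟩
    obtain ⟨j, hj⟩ := hνmem i a
    rw [hj]
    exact hrmem j
  choose μ hμ using hmemE
  -- Step 3: diagonalize each block
  have hdiag : ∀ i, ∃ Q : Matrix (Fin (m i)) (Fin (m i)) F,
      IsUnit Q.det ∧ (ρi i g₀ : Matrix (Fin (m i)) (Fin (m i)) F) * Q
        = Q * Matrix.diagonal (ν i) := by
    intro i
    refine aux_diagonalize _ (ν i) ?_ (hνroot i)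
    intro a a' h
    have h2 := hνinj (a₁ := ⟨i, a⟩) (a₂ := ⟨i, a'⟩) h
    exact eq_of_heq (Sigma.mk.inj_iff.mp h2).2
  choose Q hQdet hQeq using hdiag
  -- Step 4: the conjugated block-diagonal representation
  set yb : G → Matrix (Fin n) (Fin n) F := fun g =>
    Matrix.reindex e e (Matrix.blockDiagonal' fun i =>
      (Q i)⁻¹ * (ρi i g : Matrix (Fin (m i)) (Fin (m i)) F) * Q i) with hyb
  have hblock : ∀ (i : Fin r) (g h : G),
      ((Q i)⁻¹ * (ρi i g : Matrix (Fin (m i)) (Fin (m i)) F) * Q i) *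
        ((Q i)⁻¹ * (ρi i h : Matrix (Fin (m i)) (Fin (m i)) F) * Q i)
      = (Q i)⁻¹ * (ρi i (g * h) : Matrix (Fin (m i)) (Fin (m i)) F) * Q i := by
    intro i g h
    rw [map_mul (ρi i), Units.val_mul]
    simp only [Matrix.mul_assoc]
    rw [Matrix.mul_nonsing_inv_cancel_left _ _ (hQdet i)]
  have hymul : ∀ g h : G, yb (g * h) = yb g * yb h := by
    intro g h
    have hbd : (Matrix.blockDiagonal' fun i =>
        (Q i)⁻¹ * (ρi i (g * h) : Matrix (Fin (m i)) (Fin (m i)) F) * Q i)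
        = (Matrix.blockDiagonal' fun i =>
            (Q i)⁻¹ * (ρi i g : Matrix (Fin (m i)) (Fin (m i)) F) * Q i) *
          (Matrix.blockDiagonal' fun i =>
            (Q i)⁻¹ * (ρi i h : Matrix (Fin (m i)) (Fin (m i)) F) * Q i) := by
      rw [← Matrix.blockDiagonal'_mul]
      refine congrArg Matrix.blockDiagonal' ?_
      funext i
      exact (hblock i g h).symm
    show Matrix.reindex e e _ = Matrix.reindex e e _ * Matrix.reindex e e _
    rw [hbd]
    simp only [Matrix.reindex_apply]
    rw [Matrix.submatrix_mul_equiv]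
  have hyone : yb 1 = 1 := by
    show Matrix.reindex e e _ = 1
    have h1 : (fun i => (Q i)⁻¹ * (ρi i (1 : G) : Matrix (Fin (m i)) (Fin (m i)) F) * Q i)
        = fun i => (1 : Matrix (Fin (m i)) (Fin (m i)) F) := by
      funext i
      rw [map_one (ρi i), Units.val_one, Matrix.mul_one, Matrix.nonsing_inv_mul _ (hQdet i)]
    rw [h1]
    rw [show (fun i => (1 : Matrix (Fin (m i)) (Fin (m i)) F)) = 1 from rfl]
    rw [Matrix.blockDiagonal'_one, Matrix.reindex_apply, Matrix.submatrix_one_equiv]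
  set y : G →* Matrix (Fin n) (Fin n) F :=
    { toFun := yb, map_one' := hyone, map_mul' := hymul } with hy
  -- Step 5: traces of y lie in E₀
  have htrre : ∀ X : Matrix (Σ i : Fin r, Fin (m i)) (Σ i : Fin r, Fin (m i)) F,
      (Matrix.reindex e e X).trace = X.trace := by
    intro X
    simp only [Matrix.trace, Matrix.reindex_apply, Matrix.diag_apply, Matrix.submatrix_apply]
    exact Fintype.sum_equiv e.symm _ _ fun j => rfl
  have htry : ∀ g : G, (y g).trace ∈ E₀ := by
    intro g
    have h1 : (y g).trace = (ρ g : Matrix (Fin n) (Fin n) F).trace := by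
      show (yb g).trace = _
      rw [hyb]
      rw [hdecomp g, Matrix.trace_units_conj]
      rw [htrre, htrre, Matrix.trace_blockDiagonal', Matrix.trace_blockDiagonal']
      refine Finset.sum_congr rfl fun i _ => ?_
      rw [Matrix.trace_mul_cycle, Matrix.mul_nonsing_inv _ (hQdet i), Matrix.one_mul]
    rw [h1]
    exact htr g
  -- Step 6: y g₀ is diagonal with distinct entries from K
  set μ' : Fin n → K := fun j => μ (e.symm j) with hμ'
  have hyg₀ : y g₀ = Matrix.diagonal fun j => algebraMap K F (μ' j) := by
    show Matrix.reindex e e (Matrix.blockDiagonal' fun i =>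
      (Q i)⁻¹ * (ρi i g₀ : Matrix (Fin (m i)) (Fin (m i)) F) * Q i) = _
    have h1 : (fun i => (Q i)⁻¹ * (ρi i g₀ : Matrix (Fin (m i)) (Fin (m i)) F) * Q i)
        = fun i => Matrix.diagonal (ν i) := by
      funext i
      rw [Matrix.mul_assoc, hQeq i, Matrix.nonsing_inv_mul_cancel_left _ _ (hQdet i)]
    rw [h1, Matrix.blockDiagonal'_diagonal, Matrix.reindex_apply,
      Matrix.submatrix_diagonal _ _ e.symm.injective]
    refine congrArg Matrix.diagonal ?_
    funext j
    show ν (e.symm j).1 (e.symm j).2 = algebraMap K F (μ' j)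
    exact (hμ (e.symm j)).symm
  have hμ'inj : Function.Injective μ' := by
    intro j j' h
    have h2 : ν (e.symm j).1 (e.symm j).2 = ν (e.symm j').1 (e.symm j').2 := by
      rw [← hμ (e.symm j), ← hμ (e.symm j')]
      exact congrArg (algebraMap K F) h
    have h3 : e.symm j = e.symm j' := hνinj h2
    exact e.symm.injective h3
  -- Step 7: the two trace identities
  obtain ⟨hP2, hP3⟩ := aux_core y htry g₀ μ' hμ'inj hyg₀
  -- Step 8: conclude for each component
  intro i₀
  set z : G → Matrix (Fin (m i₀)) (Fin (m i₀)) F := fun g =>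
    (Q i₀)⁻¹ * (ρi i₀ g : Matrix (Fin (m i₀)) (Fin (m i₀)) F) * Q i₀ with hzdef
  set ι : Fin (m i₀) → Fin n := fun a => e ⟨i₀, a⟩ with hι
  have hzy : ∀ (g : G) (a b : Fin (m i₀)), z g a b = y g (ι a) (ι b) := by
    intro g a b
    show z g a b = (Matrix.reindex e e (Matrix.blockDiagonal' fun i =>
      (Q i)⁻¹ * (ρi i g : Matrix (Fin (m i)) (Fin (m i)) F) * Q i)) (ι a) (ι b)
    simp only [Matrix.reindex_apply, Matrix.submatrix_apply, hι, Equiv.symm_apply_apply]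
    exact (Matrix.blockDiagonal'_apply_eq (fun i =>
      (Q i)⁻¹ * (ρi i g : Matrix (Fin (m i)) (Fin (m i)) F) * Q i) i₀ a b).symm
  obtain ⟨j₀⟩ := (hirr i₀).1
  choose gk hgk0 using fun k : Fin (m i₀) =>
    aux_burnside (ρi i₀) (hirr i₀) (Q i₀) (hQdet i₀) j₀ k
  choose hk hhk0 using fun k : Fin (m i₀) =>
    aux_burnside (ρi i₀) (hirr i₀) (Q i₀) (hQdet i₀) k j₀
  have hmain : ∀ (g : G) (a b : Fin (m i₀)),
      z (gk a) j₀ a * z g a b * (z (gk b) j₀ b)⁻¹ ∈ E₀ := by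
    intro g a b
    have hnum : z (gk a) j₀ a * z g a b * z (hk b) b j₀ ∈ E₀ := by
      rw [hzy, hzy, hzy]
      exact hP3 (gk a) g (hk b) (ι j₀) (ι a) (ι b)
    have hden : z (gk b) j₀ b * z (hk b) b j₀ ∈ E₀ := by
      rw [hzy, hzy]
      exact hP2 (gk b) (hk b) (ι j₀) (ι b)
    have hcan : z (hk b) b j₀ * (z (hk b) b j₀)⁻¹ = 1 := mul_inv_cancel₀ (hhk0 b)
    have heq : z (gk a) j₀ a * z g a b * (z (gk b) j₀ b)⁻¹
        = (z (gk a) j₀ a * z g a b * z (hk b) b j₀) *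
          (z (gk b) j₀ b * z (hk b) b j₀)⁻¹ := by
      rw [mul_inv]
      calc z (gk a) j₀ a * z g a b * (z (gk b) j₀ b)⁻¹
          = z (gk a) j₀ a * z g a b * (z (gk b) j₀ b)⁻¹ *
            (z (hk b) b j₀ * (z (hk b) b j₀)⁻¹) := by rw [hcan, mul_one]
        _ = z (gk a) j₀ a * z g a b * z (hk b) b j₀ *
            ((z (gk b) j₀ b)⁻¹ * (z (hk b) b j₀)⁻¹) := by ring
    rw [heq]
    exact mul_mem hnum (inv_mem hden)
  -- the conjugating matrix
  set dv : Fin (m i₀) → F := fun k => z (gk k) j₀ k with hdv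
  set D : Matrix (Fin (m i₀)) (Fin (m i₀)) F := Matrix.diagonal dv with hD
  have hDdet : IsUnit D.det := by
    rw [hD, Matrix.det_diagonal]
    rw [isUnit_iff_ne_zero]
    exact Finset.prod_ne_zero_iff.2 fun k _ => hgk0 k
  have hu : IsUnit (D * (Q i₀)⁻¹) := by
    rw [Matrix.isUnit_iff_isUnit_det, Matrix.det_mul]
    refine hDdet.mul ?_
    rw [Matrix.det_nonsing_inv, isUnit_iff_ne_zero, Ring.inverse_eq_inv]
    exact inv_ne_zero (isUnit_iff_ne_zero.1 (hQdet i₀))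
  refine ⟨hu.unit, fun g a b => ?_⟩
  have h𝕄 : (hu.unit : Matrix (Fin (m i₀)) (Fin (m i₀)) F) = D * (Q i₀)⁻¹ := hu.unit_spec
  have hDinv : D⁻¹ = Matrix.diagonal fun k => (dv k)⁻¹ := by
    refine Matrix.inv_eq_right_inv ?_
    rw [hD, Matrix.diagonal_mul_diagonal]
    have : (fun k => dv k * (dv k)⁻¹) = fun _ => (1 : F) := by
      funext k
      exact mul_inv_cancel₀ (hgk0 k)
    rw [this, Matrix.diagonal_one]
  have h𝕄inv : ((hu.unit⁻¹ : Matrix.GeneralLinearGroup (Fin (m i₀)) F) :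
      Matrix (Fin (m i₀)) (Fin (m i₀)) F) = Q i₀ * D⁻¹ := by
    rw [Matrix.coe_units_inv, h𝕄, Matrix.mul_inv_rev,
      Matrix.nonsing_inv_nonsing_inv _ (hQdet i₀)]
  have hfull : ((hu.unit * ρi i₀ g * hu.unit⁻¹ : Matrix.GeneralLinearGroup (Fin (m i₀)) F) :
      Matrix (Fin (m i₀)) (Fin (m i₀)) F)
      = D * z g * Matrix.diagonal fun k => (dv k)⁻¹ := by
    rw [Units.val_mul, Units.val_mul, h𝕄, h𝕄inv, hDinv, hzdef]
    simp only [Matrix.mul_assoc]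
  rw [hfull]
  have hentry : (D * z g * Matrix.diagonal fun k => (dv k)⁻¹) a b
      = dv a * z g a b * (dv b)⁻¹ := by
    rw [Matrix.mul_diagonal, hD, Matrix.diagonal_mul]
  rw [hentry]
  exact hmain g a b
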